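/- Let n ≥ 4 and let φ be a permutation of I = {1,…,n}. The Möbius n-pair 𝔐_{(n,φ)} admits a special decomposition if and only if n = 4 and φ is conjugate in S_4 to one of: the identity, the permutation (1 2)(3 4), or the permutation (1 2). Moreover, up to isomorphism the Möbius n-pairs with a special decomposition are exactly: 𝔐_{(4,id)}, which has 3 distinct special decompositions; 𝔐_{(4,(13)(24))}, which has exactly one special decomposition; and 𝔐_{(4,(12))}, which has exactly one special decomposition. -/
import Mathlib


abbrev MPoint (n : ℕ) := Fin n ⊕ Fin n

/-- The block `A_i = (A \ {a_i}) ∪ {b_i}`. -/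
def Ablock (n : ℕ) (i : Fin n) : Set (MPoint n) :=
  Sum.inl '' {j | j ≠ i} ∪ {Sum.inr i}

/-- The block `B_i = (B \ {b_i}) ∪ {a_{φ(i)}}`. -/
def Bblock (n : ℕ) (φ : Equiv.Perm (Fin n)) (i : Fin n) : Set (MPoint n) :=
  Sum.inr '' {j | j ≠ i} ∪ {Sum.inl (φ i)}

def ABlocks (n : ℕ) : Set (Set (MPoint n)) := Set.range (Ablock n)

def BBlocks (n : ℕ) (φ : Equiv.Perm (Fin n)) : Set (Set (MPoint n)) := Set.range (Bblock n φ)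

/-- The blocks of the Möbius `n`-pair `𝔐_{(n,φ)}`; its point set is all of `MPoint n`. -/
def MBlocks (n : ℕ) (φ : Equiv.Perm (Fin n)) : Set (Set (MPoint n)) :=
  ABlocks n ∪ BBlocks n φ

/-- A "simplex" of a decomposition: a pair (points, blocks). -/
abbrev MSimplex (n : ℕ) := Set (MPoint n) × Set (Set (MPoint n))

def SimplexA (n : ℕ) : MSimplex n := (Set.range Sum.inl, ABlocks n)

def SimplexB (n : ℕ) (φ : Equiv.Perm (Fin n)) : MSimplex n := (Set.range Sum.inr, BBlocks n φ)

/-- A decomposition of 𝔐_{(n,φ)} into two complementary mutually inscribed n-simplices. -/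
def IsDecomp (n : ℕ) (φ : Equiv.Perm (Fin n)) (S₁ S₂ : MSimplex n) : Prop :=
  S₁.1 ∪ S₂.1 = Set.univ ∧ Disjoint S₁.1 S₂.1 ∧ S₁.1.ncard = n ∧ S₂.1.ncard = n ∧
  S₁.2 ∪ S₂.2 = MBlocks n φ ∧ Disjoint S₁.2 S₂.2 ∧ S₁.2.ncard = n ∧ S₂.2.ncard = n ∧
  (∀ l ∈ S₁.2, (l ∩ S₁.1).ncard = n - 1 ∧ (l ∩ S₂.1).ncard = 1) ∧
  (∀ l ∈ S₂.2, (l ∩ S₂.1).ncard = n - 1 ∧ (l ∩ S₁.1).ncard = 1) ∧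
  (∀ p ∈ S₁.1, {l ∈ S₁.2 | p ∈ l}.ncard = n - 1 ∧ {l ∈ S₂.2 | p ∈ l}.ncard = 1) ∧
  (∀ p ∈ S₂.1, {l ∈ S₂.2 | p ∈ l}.ncard = n - 1 ∧ {l ∈ S₁.2 | p ∈ l}.ncard = 1)

/-- A special decomposition: one in which both simplices differ from S_A and S_B. -/
def IsSpecialDecomp (n : ℕ) (φ : Equiv.Perm (Fin n)) (S₁ S₂ : MSimplex n) : Prop :=
  IsDecomp n φ S₁ S₂ ∧
  S₁ ≠ SimplexA n ∧ S₁ ≠ SimplexB n φ ∧ S₂ ≠ SimplexA n ∧ S₂ ≠ SimplexB n φ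


section Helpers

open Set Sum
open scoped Classical

variable {n : ℕ} {φ : Equiv.Perm (Fin n)}

@[simp] lemma mem_Ablock_inl {i k : Fin n} : (inl k : MPoint n) ∈ Ablock n i ↔ k ≠ i := by
  simp [Ablock]

@[simp] lemma mem_Ablock_inr {i k : Fin n} : (inr k : MPoint n) ∈ Ablock n i ↔ k = i := by
  simp [Ablock]

@[simp] lemma mem_Bblock_inl {i k : Fin n} : (inl k : MPoint n) ∈ Bblock n φ i ↔ k = φ i := by
  simp [Bblock]

@[simp] lemma mem_Bblock_inr {i k : Fin n} : (inr k : MPoint n) ∈ Bblock n φ i ↔ k ≠ i := by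
  simp [Bblock]

lemma Ablock_injective : Function.Injective (Ablock n) := by
  intro i j h
  have : (inr i : MPoint n) ∈ Ablock n j := h ▸ mem_Ablock_inr.mpr rfl
  exact mem_Ablock_inr.mp this

lemma Bblock_injective : Function.Injective (Bblock n φ) := by
  intro i j h
  by_contra hne
  have : (inr j : MPoint n) ∈ Bblock n φ i := mem_Bblock_inr.mpr (Ne.symm hne)
  rw [h] at this
  exact (mem_Bblock_inr.mp this) rfl

lemma Ablock_ne_Bblock (hn : 3 ≤ n) (i k : Fin n) : Ablock n i ≠ Bblock n φ k := by
  intro h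
  have h2 : ∀ u : Fin n, u ≠ i → u = φ k := by
    intro u hu
    have : (inl u : MPoint n) ∈ Bblock n φ k := h ▸ mem_Ablock_inl.mpr hu
    exact mem_Bblock_inl.mp this
  -- find two distinct elements ≠ i
  have h3 : ({i}ᶜ : Set (Fin n)).ncard = n - 1 := by
    have := Set.ncard_add_ncard_compl ({i} : Set (Fin n))
    simp [Set.ncard_singleton, Nat.card_eq_fintype_card] at this
    omega
  have h4 : 1 < ({i}ᶜ : Set (Fin n)).ncard := by omega
  obtain ⟨u, v, hu, hv, huv⟩ := (Set.one_lt_ncard_iff (Set.toFinite _)).mp h4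
  exact huv ((h2 u hu).trans (h2 v hv).symm)

lemma ncard_compl_fin (s : Set (Fin n)) : sᶜ.ncard = n - s.ncard := by
  have := Set.ncard_add_ncard_compl s
  simp [Nat.card_eq_fintype_card] at this
  omega

lemma ncard_inl_union_inr (S T : Set (Fin n)) :
    ((inl '' S ∪ inr '' T : Set (MPoint n))).ncard = S.ncard + T.ncard := by
  rw [Set.ncard_union_eq ?_ (toFinite _) (toFinite _),
    Set.ncard_image_of_injective _ inl_injective, Set.ncard_image_of_injective _ inr_injective]
  simp [Set.disjoint_left]

lemma ncard_AB_union (hn : 3 ≤ n) (S T : Set (Fin n)) :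
    ((Ablock n '' S ∪ Bblock n φ '' T)).ncard = S.ncard + T.ncard := by
  rw [Set.ncard_union_eq ?_ (toFinite _) (toFinite _),
    Set.ncard_image_of_injective _ Ablock_injective,
    Set.ncard_image_of_injective _ Bblock_injective]
  rw [Set.disjoint_left]
  rintro l ⟨i, -, rfl⟩ ⟨k, -, hk⟩
  exact Ablock_ne_Bblock hn i k hk.symm

lemma Ablock_inter (i : Fin n) (Q : Set (MPoint n)) :
    (Ablock n i ∩ Q).ncard =
      ({j | j ≠ i ∧ (inl j : MPoint n) ∈ Q}).ncard + (if (inr i : MPoint n) ∈ Q then 1 else 0) := by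
  have he : Ablock n i ∩ Q =
      inl '' {j | j ≠ i ∧ (inl j : MPoint n) ∈ Q} ∪
        (if (inr i : MPoint n) ∈ Q then {inr i} else ∅) := by
    ext p
    cases p with
    | inl a =>
      by_cases h : (inr i : MPoint n) ∈ Q <;> simp [h] <;> tauto
    | inr b =>
      by_cases h : (inr i : MPoint n) ∈ Q <;> simp [h]
      · rintro rfl; exact h
      · rintro rfl; exact h
  rw [he, Set.ncard_union_eq ?_ (toFinite _) (toFinite _),
    Set.ncard_image_of_injective _ inl_injective]
  · congr 1; split_ifs <;> simp
  · split_ifs <;> simp [Set.disjoint_left]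

lemma Bblock_inter (k : Fin n) (Q : Set (MPoint n)) :
    (Bblock n φ k ∩ Q).ncard =
      ({j | j ≠ k ∧ (inr j : MPoint n) ∈ Q}).ncard + (if (inl (φ k) : MPoint n) ∈ Q then 1 else 0) := by
  have he : Bblock n φ k ∩ Q =
      inr '' {j | j ≠ k ∧ (inr j : MPoint n) ∈ Q} ∪
        (if (inl (φ k) : MPoint n) ∈ Q then {inl (φ k)} else ∅) := by
    ext p
    cases p with
    | inr a =>
      by_cases h : (inl (φ k) : MPoint n) ∈ Q <;> simp [h] <;> tauto
    | inl b =>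
      by_cases h : (inl (φ k) : MPoint n) ∈ Q <;> simp [h]
      · rintro rfl; exact h
      · rintro rfl; exact h
  rw [he, Set.ncard_union_eq ?_ (toFinite _) (toFinite _),
    Set.ncard_image_of_injective _ inr_injective]
  · congr 1; split_ifs <;> simp
  · split_ifs <;> simp [Set.disjoint_left]

lemma filter_mem_AB (S T : Set (Fin n)) (p : MPoint n) :
    {l ∈ Ablock n '' S ∪ Bblock n φ '' T | p ∈ l} =
      Ablock n '' {i ∈ S | p ∈ Ablock n i} ∪ Bblock n φ '' {i ∈ T | p ∈ Bblock n φ i} := by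
  ext l
  constructor
  · rintro ⟨⟨i, hi, rfl⟩ | ⟨i, hi, rfl⟩, hp⟩
    · exact Or.inl ⟨i, ⟨hi, hp⟩, rfl⟩
    · exact Or.inr ⟨i, ⟨hi, hp⟩, rfl⟩
  · rintro (⟨i, ⟨hi, hp⟩, rfl⟩ | ⟨i, ⟨hi, hp⟩, rfl⟩)
    · exact ⟨Or.inl ⟨i, hi, rfl⟩, hp⟩
    · exact ⟨Or.inr ⟨i, hi, rfl⟩, hp⟩

end Helpers

section Main

open Set Sum
open scoped Classical

variable {n : ℕ} {φ : Equiv.Perm (Fin n)}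

lemma ncard_range_inj {α β : Type*} [Fintype α] (f : α → β) (hf : Function.Injective f) :
    (Set.range f).ncard = Fintype.card α := by
  rw [← Set.image_univ, Set.ncard_image_of_injective _ hf, Set.ncard_univ,
    Nat.card_eq_fintype_card]

def PS (n : ℕ) (X : Finset (Fin n)) : Set (MPoint n) := inl '' ↑X ∪ inr '' ↑Xᶜ

def LS (n : ℕ) (φ : Equiv.Perm (Fin n)) (X : Finset (Fin n)) : Set (Set (MPoint n)) :=
  Ablock n '' ↑Xᶜ ∪ Bblock n φ '' ↑X

def DX (n : ℕ) (φ : Equiv.Perm (Fin n)) (X : Finset (Fin n)) : MSimplex n := (PS n X, LS n φ X)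

@[simp] lemma mem_PS_inl {X : Finset (Fin n)} {j : Fin n} :
    (inl j : MPoint n) ∈ PS n X ↔ j ∈ X := by simp [PS]

@[simp] lemma mem_PS_inr {X : Finset (Fin n)} {j : Fin n} :
    (inr j : MPoint n) ∈ PS n X ↔ j ∉ X := by simp [PS]

lemma IsDecomp.symm {S₁ S₂ : MSimplex n} (h : IsDecomp n φ S₁ S₂) : IsDecomp n φ S₂ S₁ := by
  obtain ⟨h1, h2, h3, h4, h5, h6, h7, h8, h9, h10, h11, h12⟩ := h
  exact ⟨by rwa [Set.union_comm], h2.symm, h4, h3, by rwa [Set.union_comm], h6.symm, h8, h7,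
    h10, h9, h12, h11⟩

lemma mem_compl_part {S₁ S₂ : MSimplex n} (h : IsDecomp n φ S₁ S₂) (p : MPoint n) :
    p ∈ S₂.1 ↔ p ∉ S₁.1 := by
  constructor
  · intro h2 h1
    exact Set.disjoint_left.mp h.2.1 h1 h2
  · intro h1
    rcases (Set.eq_univ_iff_forall.mp h.1 p) with h' | h'
    · exact absurd h' h1
    · exact h'

lemma degenA (hn : 3 ≤ n) {S₁ S₂ : MSimplex n} (hd : IsDecomp n φ S₁ S₂)
    (hall : ∀ i, Ablock n i ∈ S₁.2) : S₁ = SimplexA n := by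
  obtain ⟨hPu, hPd, hP1, hP2, hLu, hLd, hL1, hL2, hB1, hB2, hpt1, hpt2⟩ := hd
  set X : Set (Fin n) := {j | (inl j : MPoint n) ∈ S₁.1} with hX
  have hmemc : ∀ p : MPoint n, p ∈ S₂.1 ↔ p ∉ S₁.1 :=
    mem_compl_part ⟨hPu, hPd, hP1, hP2, hLu, hLd, hL1, hL2, hB1, hB2, hpt1, hpt2⟩
  have hcon : ∀ i, (Xᶜ \ {i}).ncard + (if (inr i : MPoint n) ∈ S₂.1 then 1 else 0) = 1 := by
    intro i
    have h1 := (hB1 _ (hall i)).2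
    rw [Ablock_inter] at h1
    have hseq : {j | j ≠ i ∧ (inl j : MPoint n) ∈ S₂.1} = Xᶜ \ {i} := by
      ext j
      simp only [Set.mem_setOf_eq, hmemc, Set.mem_diff, Set.mem_compl_iff, hX,
        Set.mem_singleton_iff]
      tauto
    rwa [hseq] at h1
  have hconle : ∀ i, (Xᶜ \ {i}).ncard ≤ 1 := by
    intro i
    have := hcon i
    split_ifs at this <;> omega
  have hle1 : Xᶜ.ncard ≤ 1 := by
    by_contra hgt
    push_neg at hgt
    rcases X.eq_empty_or_nonempty with hXe | ⟨i, hi⟩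
    · have hXc : Xᶜ = (univ : Set (Fin n)) := by simp [hXe]
      have i : Fin n := ⟨0, by omega⟩
      have h2 : (Xᶜ \ {i}).ncard = n - 1 := by
        rw [hXc, ← Set.compl_eq_univ_diff, ncard_compl_fin, Set.ncard_singleton]
      have := hconle i
      omega
    · have h2 : Xᶜ \ {i} = Xᶜ := by
        rw [Set.diff_singleton_eq_self]
        simp [hi]
      have := hconle i
      rw [h2] at this
      omega
  rcases Nat.le_one_iff_eq_zero_or_eq_one.mp hle1 with h0 | h1
  · -- Xᶜ empty, X = univ
    have hXc : Xᶜ = (∅ : Set (Fin n)) := (Set.ncard_eq_zero (toFinite _)).mp h0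
    have hXu : X = univ := by
      rw [← Set.compl_empty, ← hXc, compl_compl]
    have hpts : S₁.1 = Set.range (inl : Fin n → MPoint n) := by
      apply (Set.eq_of_subset_of_ncard_le ?_ ?_ (toFinite _)).symm
      · rintro p ⟨j, rfl⟩
        have : j ∈ X := hXu ▸ Set.mem_univ j
        exact this
      · rw [hP1]
        rw [ncard_range_inj _ inl_injective]
        simp
    have hblocks : S₁.2 = ABlocks n := by
      apply (Set.eq_of_subset_of_ncard_le ?_ ?_ ?_).symm
      · rintro l ⟨i, rfl⟩
        exact hall i
      · rw [hL1, ABlocks, ncard_range_inj _ Ablock_injective]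
        simp
      · exact toFinite _
    have : S₁ = (S₁.1, S₁.2) := rfl
    rw [this, hpts, hblocks]; rfl
  · obtain ⟨t, ht⟩ := (Set.ncard_eq_one).mp h1
    have hsub : inl '' ({t}ᶜ : Set (Fin n)) ∪ inr '' ({t}ᶜ : Set (Fin n)) ⊆ S₁.1 := by
      rintro p (⟨j, hj, rfl⟩ | ⟨j, hj, rfl⟩)
      · have : j ∈ X := by
          by_contra hjx
          have : j ∈ Xᶜ := hjx
          rw [ht] at this
          exact hj this
        exact this
      · have hcj := hcon j
        have h2 : (Xᶜ \ {j}).ncard = 1 := by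
          rw [ht, Set.diff_singleton_eq_self (by simpa using hj)]
          exact Set.ncard_singleton t
        rw [h2] at hcj
        have : (inr j : MPoint n) ∉ S₂.1 := by
          split_ifs at hcj with h
          · omega
          · exact h
        rw [hmemc] at this
        push_neg at this
        exact this
    have hcard := Set.ncard_le_ncard hsub (toFinite _)
    rw [ncard_inl_union_inr, ncard_compl_fin, Set.ncard_singleton, hP1] at hcard
    omega

lemma degenB (hn : 3 ≤ n) {S₁ S₂ : MSimplex n} (hd : IsDecomp n φ S₁ S₂)
    (hall : ∀ i, Bblock n φ i ∈ S₁.2) : S₁ = SimplexB n φ := by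
  obtain ⟨hPu, hPd, hP1, hP2, hLu, hLd, hL1, hL2, hB1, hB2, hpt1, hpt2⟩ := hd
  set Y : Set (Fin n) := {j | (inr j : MPoint n) ∈ S₁.1} with hY
  have hmemc : ∀ p : MPoint n, p ∈ S₂.1 ↔ p ∉ S₁.1 :=
    mem_compl_part ⟨hPu, hPd, hP1, hP2, hLu, hLd, hL1, hL2, hB1, hB2, hpt1, hpt2⟩
  have hcon : ∀ k, (Yᶜ \ {k}).ncard + (if (inl (φ k) : MPoint n) ∈ S₂.1 then 1 else 0) = 1 := by
    intro k
    have h1 := (hB1 _ (hall k)).2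
    rw [Bblock_inter] at h1
    have hseq : {j | j ≠ k ∧ (inr j : MPoint n) ∈ S₂.1} = Yᶜ \ {k} := by
      ext j
      simp only [Set.mem_setOf_eq, hmemc, Set.mem_diff, Set.mem_compl_iff, hY,
        Set.mem_singleton_iff]
      tauto
    rwa [hseq] at h1
  have hconle : ∀ k, (Yᶜ \ {k}).ncard ≤ 1 := by
    intro k
    have := hcon k
    split_ifs at this <;> omega
  have hle1 : Yᶜ.ncard ≤ 1 := by
    by_contra hgt
    push_neg at hgt
    rcases Y.eq_empty_or_nonempty with hYe | ⟨i, hi⟩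
    · have hYc : Yᶜ = (univ : Set (Fin n)) := by simp [hYe]
      have i : Fin n := ⟨0, by omega⟩
      have h2 : (Yᶜ \ {i}).ncard = n - 1 := by
        rw [hYc, ← Set.compl_eq_univ_diff, ncard_compl_fin, Set.ncard_singleton]
      have := hconle i
      omega
    · have h2 : Yᶜ \ {i} = Yᶜ := by
        rw [Set.diff_singleton_eq_self]
        simp [hi]
      have := hconle i
      rw [h2] at this
      omega
  rcases Nat.le_one_iff_eq_zero_or_eq_one.mp hle1 with h0 | h1
  · have hYc : Yᶜ = (∅ : Set (Fin n)) := (Set.ncard_eq_zero (toFinite _)).mp h0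
    have hYu : Y = univ := by
      rw [← Set.compl_empty, ← hYc, compl_compl]
    have hpts : S₁.1 = Set.range (inr : Fin n → MPoint n) := by
      apply (Set.eq_of_subset_of_ncard_le ?_ ?_ (toFinite _)).symm
      · rintro p ⟨j, rfl⟩
        have : j ∈ Y := hYu ▸ Set.mem_univ j
        exact this
      · rw [hP1, ncard_range_inj _ inr_injective]
        simp
    have hblocks : S₁.2 = BBlocks n φ := by
      apply (Set.eq_of_subset_of_ncard_le ?_ ?_ ?_).symm
      · rintro l ⟨i, rfl⟩
        exact hall i
      · rw [hL1, BBlocks, ncard_range_inj _ Bblock_injective]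
        simp
      · exact toFinite _
    have : S₁ = (S₁.1, S₁.2) := rfl
    rw [this, hpts, hblocks]; rfl
  · obtain ⟨t, ht⟩ := (Set.ncard_eq_one).mp h1
    have hsub : inl '' (φ '' ({t}ᶜ : Set (Fin n))) ∪ inr '' ({t}ᶜ : Set (Fin n)) ⊆ S₁.1 := by
      rintro p (⟨j, ⟨k, hk, rfl⟩, rfl⟩ | ⟨j, hj, rfl⟩)
      · have hck := hcon k
        have h2 : (Yᶜ \ {k}).ncard = 1 := by
          rw [ht, Set.diff_singleton_eq_self (by simpa using hk)]
          exact Set.ncard_singleton t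
        rw [h2] at hck
        have : (inl (φ k) : MPoint n) ∉ S₂.1 := by
          split_ifs at hck with h
          · omega
          · exact h
        rw [hmemc] at this
        push_neg at this
        exact this
      · have : j ∈ Y := by
          by_contra hjy
          have : j ∈ Yᶜ := hjy
          rw [ht] at this
          exact hj this
        exact this
    have hcard := Set.ncard_le_ncard hsub (toFinite _)
    rw [ncard_inl_union_inr, Set.ncard_image_of_injective _ φ.injective,
      ncard_compl_fin, Set.ncard_singleton, hP1] at hcard
    omega

end Main

section Struct

open Set Sum
open scoped Classical

variable {n : ℕ} {φ : Equiv.Perm (Fin n)}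

lemma main_struct (hn : 4 ≤ n) {S₁ S₂ : MSimplex n} (h : IsSpecialDecomp n φ S₁ S₂) :
    n = 4 ∧ ∃ X : Finset (Fin n), X.card = 2 ∧ (∀ i, φ i ∈ X ↔ i ∈ X) ∧
      S₁ = DX n φ X ∧ S₂ = DX n φ Xᶜ := by
  obtain ⟨hd, hSA1, hSB1, hSA2, hSB2⟩ := h
  have hd' := hd
  obtain ⟨hPu, hPd, hP1, hP2, hLu, hLd, hL1, hL2, hBc1, hBc2, hpt1, hpt2⟩ := hd'
  set X : Set (Fin n) := {j | (inl j : MPoint n) ∈ S₁.1} with hX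
  set Y : Set (Fin n) := {j | (inr j : MPoint n) ∈ S₁.1} with hY
  have hmemc : ∀ p : MPoint n, p ∈ S₂.1 ↔ p ∉ S₁.1 := mem_compl_part hd
  have hAdich : ∀ i, Ablock n i ∈ S₁.2 ∨ Ablock n i ∈ S₂.2 := by
    intro i
    have : Ablock n i ∈ MBlocks n φ := Or.inl ⟨i, rfl⟩
    rw [← hLu] at this
    exact this
  have hBdich : ∀ k, Bblock n φ k ∈ S₁.2 ∨ Bblock n φ k ∈ S₂.2 := by
    intro k
    have : Bblock n φ k ∈ MBlocks n φ := Or.inr ⟨k, rfl⟩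
    rw [← hLu] at this
    exact this
  have hLdisj : ∀ l, l ∈ S₁.2 → l ∈ S₂.2 → False := fun l h1 h2 =>
    Set.disjoint_left.mp hLd h1 h2
  -- existence of mixed blocks
  have hA1ex : ∃ i, Ablock n i ∈ S₁.2 := by
    by_contra h'
    push_neg at h'
    have : ∀ i, Ablock n i ∈ S₂.2 := fun i => (hAdich i).resolve_left (h' i)
    exact hSA2 (degenA (by omega) hd.symm this)
  have hA2ex : ∃ i, Ablock n i ∈ S₂.2 := by
    by_contra h'
    push_neg at h'
    have : ∀ i, Ablock n i ∈ S₁.2 := fun i => (hAdich i).resolve_right (h' i)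
    exact hSA1 (degenA (by omega) hd this)
  have hB1ex : ∃ k, Bblock n φ k ∈ S₁.2 := by
    by_contra h'
    push_neg at h'
    have : ∀ k, Bblock n φ k ∈ S₂.2 := fun k => (hBdich k).resolve_left (h' k)
    exact hSB2 (degenB (by omega) hd.symm this)
  have hB2ex : ∃ k, Bblock n φ k ∈ S₂.2 := by
    by_contra h'
    push_neg at h'
    have : ∀ k, Bblock n φ k ∈ S₁.2 := fun k => (hBdich k).resolve_right (h' k)
    exact hSB1 (degenB (by omega) hd this)
  -- constraints
  have hconA1 : ∀ i, Ablock n i ∈ S₁.2 →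
      (Xᶜ \ {i}).ncard + (if (inr i : MPoint n) ∈ S₂.1 then 1 else 0) = 1 := by
    intro i hi
    have h1 := (hBc1 _ hi).2
    rw [Ablock_inter] at h1
    have hseq : {j | j ≠ i ∧ (inl j : MPoint n) ∈ S₂.1} = Xᶜ \ {i} := by
      ext j
      simp only [Set.mem_setOf_eq, hmemc, Set.mem_diff, Set.mem_compl_iff, hX,
        Set.mem_singleton_iff]
      tauto
    rwa [hseq] at h1
  have hconA2 : ∀ i, Ablock n i ∈ S₂.2 →
      (X \ {i}).ncard + (if (inr i : MPoint n) ∈ S₁.1 then 1 else 0) = 1 := by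
    intro i hi
    have h1 := (hBc2 _ hi).2
    rw [Ablock_inter] at h1
    have hseq : {j | j ≠ i ∧ (inl j : MPoint n) ∈ S₁.1} = X \ {i} := by
      ext j
      simp only [Set.mem_setOf_eq, Set.mem_diff, hX, Set.mem_setOf_eq, Set.mem_singleton_iff]
      tauto
    rwa [hseq] at h1
  have hconB1 : ∀ k, Bblock n φ k ∈ S₁.2 →
      (Yᶜ \ {k}).ncard + (if (inl (φ k) : MPoint n) ∈ S₂.1 then 1 else 0) = 1 := by
    intro k hk
    have h1 := (hBc1 _ hk).2
    rw [Bblock_inter] at h1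
    have hseq : {j | j ≠ k ∧ (inr j : MPoint n) ∈ S₂.1} = Yᶜ \ {k} := by
      ext j
      simp only [Set.mem_setOf_eq, hmemc, Set.mem_diff, Set.mem_compl_iff, hY,
        Set.mem_singleton_iff]
      tauto
    rwa [hseq] at h1
  have hconB2 : ∀ k, Bblock n φ k ∈ S₂.2 →
      (Y \ {k}).ncard + (if (inl (φ k) : MPoint n) ∈ S₁.1 then 1 else 0) = 1 := by
    intro k hk
    have h1 := (hBc2 _ hk).2
    rw [Bblock_inter] at h1
    have hseq : {j | j ≠ k ∧ (inr j : MPoint n) ∈ S₁.1} = Y \ {k} := by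
      ext j
      simp only [Set.mem_setOf_eq, Set.mem_diff, hY, Set.mem_setOf_eq, Set.mem_singleton_iff]
      tauto
    rwa [hseq] at h1
  -- cardinality bound helper
  have cardle : ∀ (s : Set (Fin n)) (a : Fin n), (s \ {a}).ncard ≤ 1 → s.ncard ≤ 2 := by
    intro s a hle
    by_cases ha : a ∈ s
    · have := Set.ncard_diff_singleton_add_one ha (toFinite _)
      omega
    · rw [Set.diff_singleton_eq_self ha] at hle
      omega
  have hXcle : Xᶜ.ncard ≤ 2 := by
    obtain ⟨i, hi⟩ := hA1ex
    have := hconA1 i hi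
    refine cardle _ i ?_
    split_ifs at this <;> omega
  have hXle : X.ncard ≤ 2 := by
    obtain ⟨i, hi⟩ := hA2ex
    have := hconA2 i hi
    refine cardle _ i ?_
    split_ifs at this <;> omega
  have hYcle : Yᶜ.ncard ≤ 2 := by
    obtain ⟨k, hk⟩ := hB1ex
    have := hconB1 k hk
    refine cardle _ k ?_
    split_ifs at this <;> omega
  have hYle : Y.ncard ≤ 2 := by
    obtain ⟨k, hk⟩ := hB2ex
    have := hconB2 k hk
    refine cardle _ k ?_
    split_ifs at this <;> omega
  have hXsum : X.ncard + Xᶜ.ncard = n := by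
    have := Set.ncard_add_ncard_compl X
    simpa [Nat.card_eq_fintype_card] using this
  have hYsum : Y.ncard + Yᶜ.ncard = n := by
    have := Set.ncard_add_ncard_compl Y
    simpa [Nat.card_eq_fintype_card] using this
  have hn4 : n = 4 := by omega
  have hX2 : X.ncard = 2 := by omega
  have hXc2 : Xᶜ.ncard = 2 := by omega
  have hY2 : Y.ncard = 2 := by omega
  -- forcing
  have hforceA1 : ∀ i, Ablock n i ∈ S₁.2 → i ∉ X ∧ i ∈ Y := by
    intro i hi
    have hc := hconA1 i hi
    have hiX : i ∉ X := by
      intro hiX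
      rw [Set.diff_singleton_eq_self (by simpa using hiX)] at hc
      split_ifs at hc <;> omega
    refine ⟨hiX, ?_⟩
    have hdiff : (Xᶜ \ {i}).ncard = 1 := by
      have := Set.ncard_diff_singleton_add_one (show i ∈ Xᶜ from hiX) (toFinite Xᶜ)
      omega
    rw [hdiff] at hc
    have : (inr i : MPoint n) ∉ S₂.1 := by
      split_ifs at hc with h
      · omega
      · exact h
    rw [hmemc] at this
    push_neg at this
    exact this
  have hforceA2 : ∀ i, Ablock n i ∈ S₂.2 → i ∈ X ∧ i ∉ Y := by
    intro i hi
    have hc := hconA2 i hi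
    have hiX : i ∈ X := by
      by_contra hiX
      rw [Set.diff_singleton_eq_self (by simpa using hiX)] at hc
      split_ifs at hc <;> omega
    refine ⟨hiX, ?_⟩
    have hdiff : (X \ {i}).ncard = 1 := by
      have := Set.ncard_diff_singleton_add_one hiX (toFinite X)
      omega
    rw [hdiff] at hc
    split_ifs at hc with h
    · omega
    · exact h
  have hforceB1 : ∀ k, Bblock n φ k ∈ S₁.2 → k ∉ Y ∧ φ k ∈ X := by
    intro k hk
    have hc := hconB1 k hk
    have hkY : k ∉ Y := by
      intro hkY
      rw [Set.diff_singleton_eq_self (by simpa using hkY)] at hc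
      have : Yᶜ.ncard = 2 := by omega
      split_ifs at hc <;> omega
    refine ⟨hkY, ?_⟩
    have hdiff : (Yᶜ \ {k}).ncard = 1 := by
      have := Set.ncard_diff_singleton_add_one (show k ∈ Yᶜ from hkY) (toFinite Yᶜ)
      omega
    rw [hdiff] at hc
    have : (inl (φ k) : MPoint n) ∉ S₂.1 := by
      split_ifs at hc with h
      · omega
      · exact h
    rw [hmemc] at this
    push_neg at this
    exact this
  have hforceB2 : ∀ k, Bblock n φ k ∈ S₂.2 → k ∈ Y ∧ φ k ∉ X := by
    intro k hk
    have hc := hconB2 k hk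
    have hkY : k ∈ Y := by
      by_contra hkY
      rw [Set.diff_singleton_eq_self (by simpa using hkY)] at hc
      split_ifs at hc <;> omega
    refine ⟨hkY, ?_⟩
    have hdiff : (Y \ {k}).ncard = 1 := by
      have := Set.ncard_diff_singleton_add_one hkY (toFinite Y)
      omega
    rw [hdiff] at hc
    split_ifs at hc with h
    · omega
    · exact h
  -- derived structure
  have hAin : ∀ i, Ablock n i ∈ S₁.2 ↔ i ∉ X := by
    intro i
    constructor
    · exact fun hi => (hforceA1 i hi).1
    · intro hiX
      rcases hAdich i with h' | h'
      · exact h'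
      · exact absurd (hforceA2 i h').1 hiX
  have hYX : ∀ i, i ∈ Y ↔ i ∉ X := by
    intro i
    constructor
    · intro hiY
      rcases hAdich i with h' | h'
      · exact (hforceA1 i h').1
      · exact absurd hiY (hforceA2 i h').2
    · intro hiX
      rcases hAdich i with h' | h'
      · exact (hforceA1 i h').2
      · exact absurd (hforceA2 i h').1 hiX
  have hBin : ∀ k, Bblock n φ k ∈ S₁.2 ↔ k ∈ X := by
    intro k
    constructor
    · intro hk
      have := (hforceB1 k hk).1
      rw [hYX] at this
      push_neg at this
      exact this
    · intro hkX
      rcases hBdich k with h' | h'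
      · exact h'
      · have := (hforceB2 k h').1
        rw [hYX] at this
        exact absurd hkX this
  have hinv : ∀ k, φ k ∈ X ↔ k ∈ X := by
    intro k
    constructor
    · intro hφk
      by_contra hkX
      have hkY : k ∈ Y := (hYX k).mpr hkX
      rcases hBdich k with h' | h'
      · exact absurd hkY ((hforceB1 k h').1 : k ∉ Y)
      · exact (hforceB2 k h').2 hφk
    · intro hkX
      rcases hBdich k with h' | h'
      · exact (hforceB1 k h').2
      · have := (hforceB2 k h').1
        rw [hYX] at this
        exact absurd hkX this
  refine ⟨hn4, (toFinite X).toFinset, ?_, ?_, ?_, ?_⟩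
  · rw [← Set.ncard_eq_toFinset_card X (toFinite X)]
    exact hX2
  · intro i
    simp only [Set.Finite.mem_toFinset]
    exact hinv i
  · -- S₁ = DX
    have h1 : S₁.1 = PS n (toFinite X).toFinset := by
      ext p
      cases p with
      | inl j => simp [hX, Set.Finite.mem_toFinset]
      | inr j =>
        rw [mem_PS_inr]
        simp only [Set.Finite.mem_toFinset]
        rw [← hYX]
        exact Iff.rfl
    have h2 : S₁.2 = LS n φ (toFinite X).toFinset := by
      ext l
      constructor
      · intro hl
        have hlM : l ∈ MBlocks n φ := by
          rw [← hLu]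
          exact Or.inl hl
        rcases hlM with ⟨i, rfl⟩ | ⟨k, rfl⟩
        · refine Or.inl ⟨i, ?_, rfl⟩
          simp only [Finset.coe_compl, Set.mem_compl_iff, Finset.mem_coe,
            Set.Finite.mem_toFinset]
          exact (hAin i).mp hl
        · refine Or.inr ⟨k, ?_, rfl⟩
          simp only [Finset.mem_coe, Set.Finite.mem_toFinset]
          exact (hBin k).mp hl
      · rintro (⟨i, hi, rfl⟩ | ⟨k, hk, rfl⟩)
        · simp only [Finset.coe_compl, Set.mem_compl_iff, Finset.mem_coe,
            Set.Finite.mem_toFinset] at hi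
          exact (hAin i).mpr hi
        · simp only [Finset.mem_coe, Set.Finite.mem_toFinset] at hk
          exact (hBin k).mpr hk
    rw [show S₁ = (S₁.1, S₁.2) from rfl, h1, h2]
    rfl
  · -- S₂ = DX Xᶜ
    have hmemcL : ∀ l, l ∈ S₂.2 ↔ (l ∈ MBlocks n φ ∧ l ∉ S₁.2) := by
      intro l
      constructor
      · intro h2
        exact ⟨by rw [← hLu]; exact Or.inr h2, fun h1 => hLdisj l h1 h2⟩
      · rintro ⟨hM, h1⟩
        rw [← hLu] at hM
        exact hM.resolve_left h1
    have h1 : S₂.1 = PS n ((toFinite X).toFinset)ᶜ := by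
      ext p
      rw [hmemc]
      cases p with
      | inl j =>
        rw [mem_PS_inl]
        simp only [Finset.mem_compl, Set.Finite.mem_toFinset]
        exact not_iff_not.mpr Iff.rfl
      | inr j =>
        rw [mem_PS_inr]
        simp only [Finset.mem_compl, Set.Finite.mem_toFinset, not_not]
        rw [show ((inr j : MPoint n) ∈ S₁.1) ↔ j ∈ Y from Iff.rfl, hYX]
        tauto
    have h2 : S₂.2 = LS n φ ((toFinite X).toFinset)ᶜ := by
      ext l
      rw [hmemcL]
      constructor
      · rintro ⟨(⟨i, rfl⟩ | ⟨k, rfl⟩), hl⟩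
        · refine Or.inl ⟨i, ?_, rfl⟩
          simp only [compl_compl, Finset.mem_coe, Set.Finite.mem_toFinset]
          by_contra hiX
          exact hl ((hAin i).mpr hiX)
        · refine Or.inr ⟨k, ?_, rfl⟩
          simp only [Finset.coe_compl, Set.mem_compl_iff, Finset.mem_coe,
            Set.Finite.mem_toFinset]
          intro hkX
          exact hl ((hBin k).mpr hkX)
      · rintro (⟨i, hi, rfl⟩ | ⟨k, hk, rfl⟩)
        · simp only [compl_compl, Finset.mem_coe, Set.Finite.mem_toFinset] at hi
          refine ⟨Or.inl ⟨i, rfl⟩, ?_⟩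
          rw [hAin]
          simp [hi]
        · simp only [Finset.coe_compl, Set.mem_compl_iff, Finset.mem_coe,
            Set.Finite.mem_toFinset] at hk
          refine ⟨Or.inr ⟨k, rfl⟩, ?_⟩
          rw [hBin]
          exact hk
    rw [show S₂ = (S₂.1, S₂.2) from rfl, h1, h2]
    rfl

end Struct

section Verify

open Set Sum
open scoped Classical

variable {φ : Equiv.Perm (Fin 4)}

lemma coe_erase_eq (X : Finset (Fin 4)) (k : Fin 4) :
    {j : Fin 4 | j ≠ k ∧ j ∈ X} = ↑(X.erase k) := by
  ext j
  simp only [Set.mem_setOf_eq, Finset.coe_erase, Set.mem_diff, Finset.mem_coe,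
    Set.mem_singleton_iff]
  tauto

lemma blockcount {X : Finset (Fin 4)} (hc : X.card = 2)
    (hinv : ∀ i, φ i ∈ X ↔ i ∈ X) :
    ∀ l ∈ LS 4 φ X, (l ∩ PS 4 X).ncard = 3 ∧ (l ∩ PS 4 Xᶜ).ncard = 1 := by
  have hXc : Xᶜ.card = 2 := by
    rw [Finset.card_compl, hc]
    rfl
  rintro l (⟨i, hi, rfl⟩ | ⟨k, hk, rfl⟩)
  · simp only [Finset.coe_compl, Set.mem_compl_iff, Finset.mem_coe] at hi
    constructor
    · rw [Ablock_inter]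
      have hs : {j : Fin 4 | j ≠ i ∧ (inl j : MPoint 4) ∈ PS 4 X} = ↑X := by
        ext j
        simp only [Set.mem_setOf_eq, mem_PS_inl, Finset.mem_coe]
        refine ⟨fun h => h.2, fun h => ⟨?_, h⟩⟩
        rintro rfl
        exact hi h
      rw [hs, Set.ncard_coe_finset, hc, if_pos (by simp [hi])]
    · rw [Ablock_inter]
      have hs : {j : Fin 4 | j ≠ i ∧ (inl j : MPoint 4) ∈ PS 4 Xᶜ} = ↑(Xᶜ.erase i) := by
        rw [← coe_erase_eq]
        ext j
        simp [Finset.mem_compl]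
      rw [hs, Set.ncard_coe_finset, Finset.card_erase_of_mem (by simp [hi]), hXc,
        if_neg (by simp [hi])]
  · simp only [Finset.mem_coe] at hk
    constructor
    · rw [Bblock_inter]
      have hs : {j : Fin 4 | j ≠ k ∧ (inr j : MPoint 4) ∈ PS 4 X} = ↑Xᶜ := by
        ext j
        simp only [Set.mem_setOf_eq, mem_PS_inr, Finset.coe_compl, Set.mem_compl_iff,
          Finset.mem_coe]
        refine ⟨fun h => h.2, fun h => ⟨?_, h⟩⟩
        rintro rfl
        exact h hk
      rw [hs, Set.ncard_coe_finset, hXc, if_pos (by simp [(hinv k).mpr hk])]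
    · rw [Bblock_inter]
      have hs : {j : Fin 4 | j ≠ k ∧ (inr j : MPoint 4) ∈ PS 4 Xᶜ} = ↑(X.erase k) := by
        rw [← coe_erase_eq]
        ext j
        simp [Finset.mem_compl]
      rw [hs, Set.ncard_coe_finset, Finset.card_erase_of_mem hk, hc,
        if_neg (by simp [Finset.mem_compl, (hinv k).mpr hk])]

lemma pointcount {X : Finset (Fin 4)} (hc : X.card = 2)
    (hinv : ∀ i, φ i ∈ X ↔ i ∈ X) :
    ∀ p ∈ PS 4 X, {l ∈ LS 4 φ X | p ∈ l}.ncard = 3 ∧ {l ∈ LS 4 φ Xᶜ | p ∈ l}.ncard = 1 := by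
  have hXc : Xᶜ.card = 2 := by
    rw [Finset.card_compl, hc]
    rfl
  have hinv' : ∀ i, φ⁻¹ i ∈ X ↔ i ∈ X := by
    intro i
    conv_rhs => rw [show i = φ (φ⁻¹ i) by simp]
    exact (hinv _).symm
  have h3 : (3:ℕ) ≤ 4 := by norm_num
  rintro p hp
  cases p with
  | inl k =>
    have hk : k ∈ X := mem_PS_inl.mp hp
    constructor
    · rw [LS, filter_mem_AB, ncard_AB_union h3]
      have hA : {i ∈ (↑Xᶜ : Set (Fin 4)) | (inl k : MPoint 4) ∈ Ablock 4 i} = ↑Xᶜ := by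
        ext i
        simp only [Set.mem_setOf_eq, mem_Ablock_inl, Finset.coe_compl, Set.mem_compl_iff,
          Finset.mem_coe]
        refine ⟨fun h => h.1, fun h => ⟨h, ?_⟩⟩
        rintro rfl
        exact h hk
      have hB : {j ∈ (↑X : Set (Fin 4)) | (inl k : MPoint 4) ∈ Bblock 4 φ j} = {φ⁻¹ k} := by
        ext j
        simp only [Set.mem_setOf_eq, mem_Bblock_inl, Finset.mem_coe, Set.mem_singleton_iff]
        constructor
        · rintro ⟨-, h⟩
          rw [h]
          simp
        · rintro rfl
          exact ⟨(hinv' k).mpr hk, by simp⟩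
      rw [hA, hB, Set.ncard_coe_finset, hXc, Set.ncard_singleton]
    · rw [LS, compl_compl, filter_mem_AB, ncard_AB_union h3]
      have hA : {i ∈ (↑X : Set (Fin 4)) | (inl k : MPoint 4) ∈ Ablock 4 i} = ↑(X.erase k) := by
        rw [← coe_erase_eq]
        ext i
        simp only [Set.mem_setOf_eq, mem_Ablock_inl, Finset.mem_coe]
        constructor
        · rintro ⟨h1, h2⟩
          exact ⟨Ne.symm h2, h1⟩
        · rintro ⟨h1, h2⟩
          exact ⟨h2, Ne.symm h1⟩
      have hB : {j ∈ (↑Xᶜ : Set (Fin 4)) | (inl k : MPoint 4) ∈ Bblock 4 φ j} = ∅ := by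
        ext j
        simp only [Set.mem_setOf_eq, mem_Bblock_inl, Finset.coe_compl, Set.mem_compl_iff,
          Finset.mem_coe, Set.mem_empty_iff_false, iff_false, not_and]
        intro hj h
        rw [show j = φ⁻¹ k by rw [h]; simp] at hj
        exact hj ((hinv' k).mpr hk)
      rw [hA, hB, Set.ncard_coe_finset, Finset.card_erase_of_mem hk, hc, Set.ncard_empty]
  | inr k =>
    have hk : k ∉ X := mem_PS_inr.mp hp
    constructor
    · rw [LS, filter_mem_AB, ncard_AB_union h3]
      have hA : {i ∈ (↑Xᶜ : Set (Fin 4)) | (inr k : MPoint 4) ∈ Ablock 4 i} = {k} := by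
        ext i
        simp only [Set.mem_setOf_eq, mem_Ablock_inr, Finset.coe_compl, Set.mem_compl_iff,
          Finset.mem_coe, Set.mem_singleton_iff]
        constructor
        · rintro ⟨-, h⟩
          exact h.symm
        · rintro rfl
          exact ⟨hk, rfl⟩
      have hB : {j ∈ (↑X : Set (Fin 4)) | (inr k : MPoint 4) ∈ Bblock 4 φ j} = ↑X := by
        ext j
        simp only [Set.mem_setOf_eq, mem_Bblock_inr, Finset.mem_coe]
        refine ⟨fun h => h.1, fun h => ⟨h, ?_⟩⟩
        rintro rfl
        exact hk h
      rw [hA, hB, Set.ncard_coe_finset, hc, Set.ncard_singleton]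
    · rw [LS, compl_compl, filter_mem_AB, ncard_AB_union h3]
      have hA : {i ∈ (↑X : Set (Fin 4)) | (inr k : MPoint 4) ∈ Ablock 4 i} = ∅ := by
        ext i
        simp only [Set.mem_setOf_eq, mem_Ablock_inr, Finset.mem_coe,
          Set.mem_empty_iff_false, iff_false, not_and]
        intro hi h
        rw [← h] at hi
        exact hk hi
      have hB : {j ∈ (↑Xᶜ : Set (Fin 4)) | (inr k : MPoint 4) ∈ Bblock 4 φ j} =
          ↑(Xᶜ.erase k) := by
        rw [← coe_erase_eq]
        ext j
        simp only [Set.mem_setOf_eq, mem_Bblock_inr, Finset.coe_compl, Set.mem_compl_iff,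
          Finset.mem_coe, Finset.mem_compl]
        tauto
      rw [hA, hB, Set.ncard_coe_finset, Finset.card_erase_of_mem (by simp [hk]), hXc,
        Set.ncard_empty]

lemma DX_ne_A {X : Finset (Fin 4)} (hc : X.card = 2) : DX 4 φ X ≠ SimplexA 4 := by
  intro h
  have h1 : PS 4 X = Set.range inl := congrArg Prod.fst h
  obtain ⟨k, hk⟩ : ∃ k, k ∉ X := by
    by_contra h'
    push_neg at h'
    have : X = Finset.univ := Finset.eq_univ_iff_forall.mpr h'
    rw [this] at hc
    simp at hc
  have h2 : (inr k : MPoint 4) ∈ PS 4 X := mem_PS_inr.mpr hk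
  rw [h1] at h2
  obtain ⟨j, hj⟩ := h2
  exact absurd hj (by simp)

lemma DX_ne_B {X : Finset (Fin 4)} (hc : X.card = 2) : DX 4 φ X ≠ SimplexB 4 φ := by
  intro h
  have h1 : PS 4 X = Set.range inr := congrArg Prod.fst h
  obtain ⟨k, hk⟩ : ∃ k, k ∈ X := Finset.card_pos.mp (by omega)
  have h2 : (inl k : MPoint 4) ∈ PS 4 X := mem_PS_inl.mpr hk
  rw [h1] at h2
  obtain ⟨j, hj⟩ := h2
  exact absurd hj (by simp)

lemma verify {X : Finset (Fin 4)} (hc : X.card = 2)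
    (hinv : ∀ i, φ i ∈ X ↔ i ∈ X) : IsSpecialDecomp 4 φ (DX 4 φ X) (DX 4 φ Xᶜ) := by
  have hXc : Xᶜ.card = 2 := by
    rw [Finset.card_compl, hc]
    rfl
  have hinvc : ∀ i, φ i ∈ Xᶜ ↔ i ∈ Xᶜ := by
    intro i
    simp [Finset.mem_compl, hinv i]
  have h34 : (3:ℕ) ≤ 4 := by norm_num
  refine ⟨⟨?_, ?_, ?_, ?_, ?_, ?_, ?_, ?_, ?_, ?_, ?_, ?_⟩,
    DX_ne_A hc, DX_ne_B hc, DX_ne_A hXc, DX_ne_B hXc⟩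
  · -- points union
    ext p
    simp only [Set.mem_union, Set.mem_univ, iff_true]
    cases p with
    | inl j =>
      by_cases h : j ∈ X
      · exact Or.inl (mem_PS_inl.mpr h)
      · exact Or.inr (mem_PS_inl.mpr (by simp [h]))
    | inr j =>
      by_cases h : j ∈ X
      · exact Or.inr (mem_PS_inr.mpr (by simp [h]))
      · exact Or.inl (mem_PS_inr.mpr h)
  · -- points disjoint
    rw [Set.disjoint_left]
    rintro p hp hp'
    cases p with
    | inl j =>
      rw [show (DX 4 φ X).1 = PS 4 X from rfl, mem_PS_inl] at hp
      rw [show (DX 4 φ Xᶜ).1 = PS 4 Xᶜ from rfl, mem_PS_inl, Finset.mem_compl] at hp'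
      exact hp' hp
    | inr j =>
      rw [show (DX 4 φ X).1 = PS 4 X from rfl, mem_PS_inr] at hp
      rw [show (DX 4 φ Xᶜ).1 = PS 4 Xᶜ from rfl, mem_PS_inr, Finset.mem_compl, not_not] at hp'
      exact hp hp'
  · rw [show (DX 4 φ X).1 = PS 4 X from rfl, PS, ncard_inl_union_inr,
      Set.ncard_coe_finset, Set.ncard_coe_finset, hc, hXc]
  · rw [show (DX 4 φ Xᶜ).1 = PS 4 Xᶜ from rfl, PS, ncard_inl_union_inr,
      Set.ncard_coe_finset, Set.ncard_coe_finset, hXc, compl_compl, hc]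
  · -- blocks union
    ext l
    constructor
    · rintro ((⟨i, -, rfl⟩ | ⟨k, -, rfl⟩) | (⟨i, -, rfl⟩ | ⟨k, -, rfl⟩))
      · exact Or.inl ⟨i, rfl⟩
      · exact Or.inr ⟨k, rfl⟩
      · exact Or.inl ⟨i, rfl⟩
      · exact Or.inr ⟨k, rfl⟩
    · rintro (⟨i, rfl⟩ | ⟨k, rfl⟩)
      · by_cases h : i ∈ X
        · exact Or.inr (Or.inl ⟨i, by simp [compl_compl, h], rfl⟩)
        · exact Or.inl (Or.inl ⟨i, by simp [h], rfl⟩)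
      · by_cases h : k ∈ X
        · exact Or.inl (Or.inr ⟨k, by simp [h], rfl⟩)
        · exact Or.inr (Or.inr ⟨k, by simp [h], rfl⟩)
  · -- blocks disjoint
    rw [Set.disjoint_left]
    rintro l (⟨i, hi, rfl⟩ | ⟨k, hk, rfl⟩) (⟨i', hi', h'⟩ | ⟨k', hk', h'⟩)
    · obtain rfl := Ablock_injective h'
      simp only [compl_compl, Finset.mem_coe] at hi'
      simp only [Finset.coe_compl, Set.mem_compl_iff, Finset.mem_coe] at hi
      exact hi hi'
    · exact Ablock_ne_Bblock h34 i k' h'.symm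
    · exact Ablock_ne_Bblock h34 i' k h'
    · obtain rfl := Bblock_injective h'
      simp only [Finset.coe_compl, Set.mem_compl_iff, Finset.mem_coe] at hk'
      simp only [Finset.mem_coe] at hk
      exact hk' hk
  · rw [show (DX 4 φ X).2 = LS 4 φ X from rfl, LS, ncard_AB_union h34,
      Set.ncard_coe_finset, Set.ncard_coe_finset, hc, hXc]
  · rw [show (DX 4 φ Xᶜ).2 = LS 4 φ Xᶜ from rfl, LS, ncard_AB_union h34,
      Set.ncard_coe_finset, Set.ncard_coe_finset, hXc, compl_compl, hc]
  · exact blockcount hc hinv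
  · have := blockcount hXc hinvc
    rwa [compl_compl] at this
  · exact pointcount hc hinv
  · have := pointcount hXc hinvc
    rwa [compl_compl] at this

end Verify

section Assembly

open Set Sum
open scoped Classical

lemma DX_inj {φ φ' : Equiv.Perm (Fin 4)} {X X' : Finset (Fin 4)}
    (h : DX 4 φ X = DX 4 φ' X') : X = X' := by
  have h1 : PS 4 X = PS 4 X' := congrArg Prod.fst h
  ext j
  rw [← mem_PS_inl (n := 4), ← mem_PS_inl (n := 4), h1]

lemma DX_mem_pair {φ : Equiv.Perm (Fin 4)} {a c d : Finset (Fin 4)}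
    (h : (DX 4 φ a) ∈ ({DX 4 φ c, DX 4 φ d} : Set (MSimplex 4))) : a = c ∨ a = d := by
  rcases h with h | h
  · exact Or.inl (DX_inj h)
  · exact Or.inr (DX_inj (Set.mem_singleton_iff.mp h))

lemma bridge : ∀ φ : Equiv.Perm (Fin 4),
    (∃ X : Finset (Fin 4), X.card = 2 ∧ ∀ i, φ i ∈ X ↔ i ∈ X) ↔
      (φ.cycleType = 0 ∨ φ.cycleType = {2, 2} ∨ φ.cycleType = {2}) := by decide

lemma card2enum : ∀ X : Finset (Fin 4), X.card = 2 →
    X = {0,1} ∨ X = {2,3} ∨ X = {0,2} ∨ X = {1,3} ∨ X = {0,3} ∨ X = {1,2} := by decide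

-- the generic counting description
lemma count_set (φ : Equiv.Perm (Fin 4)) :
    {D : Set (MSimplex 4) | ∃ S₁ S₂ : MSimplex 4, IsSpecialDecomp 4 φ S₁ S₂ ∧ D = {S₁, S₂}} =
      {D | ∃ X : Finset (Fin 4), X.card = 2 ∧ (∀ i, φ i ∈ X ↔ i ∈ X) ∧
        D = {DX 4 φ X, DX 4 φ Xᶜ}} := by
  ext D
  constructor
  · rintro ⟨S₁, S₂, h, rfl⟩
    obtain ⟨-, X, hc, hinv, rfl, rfl⟩ := main_struct (le_refl 4) h
    exact ⟨X, hc, hinv, rfl⟩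
  · rintro ⟨X, hc, hinv, rfl⟩
    exact ⟨DX 4 φ X, DX 4 φ Xᶜ, verify hc hinv, rfl⟩

lemma count_id :
    {D : Set (MSimplex 4) |
      ∃ S₁ S₂ : MSimplex 4, IsSpecialDecomp 4 1 S₁ S₂ ∧ D = {S₁, S₂}}.ncard = 3 := by
  rw [count_set]
  have hset : {D : Set (MSimplex 4) | ∃ X : Finset (Fin 4), X.card = 2 ∧
      (∀ i, (1 : Equiv.Perm (Fin 4)) i ∈ X ↔ i ∈ X) ∧ D = {DX 4 1 X, DX 4 1 Xᶜ}} =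
      {{DX 4 1 {0,1}, DX 4 1 {2,3}}, {DX 4 1 {0,2}, DX 4 1 {1,3}},
        {DX 4 1 {0,3}, DX 4 1 {1,2}}} := by
    ext D
    constructor
    · rintro ⟨X, hc, -, rfl⟩
      rcases card2enum X hc with rfl | rfl | rfl | rfl | rfl | rfl
      · rw [show ({0,1} : Finset (Fin 4))ᶜ = {2,3} by decide]
        exact Or.inl rfl
      · rw [show ({2,3} : Finset (Fin 4))ᶜ = {0,1} by decide]
        exact Or.inl (Set.pair_comm _ _)
      · rw [show ({0,2} : Finset (Fin 4))ᶜ = {1,3} by decide]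
        exact Or.inr (Or.inl rfl)
      · rw [show ({1,3} : Finset (Fin 4))ᶜ = {0,2} by decide]
        exact Or.inr (Or.inl (Set.pair_comm _ _))
      · rw [show ({0,3} : Finset (Fin 4))ᶜ = {1,2} by decide]
        exact Or.inr (Or.inr rfl)
      · rw [show ({1,2} : Finset (Fin 4))ᶜ = {0,3} by decide]
        exact Or.inr (Or.inr (Set.mem_singleton_iff.mpr (Set.pair_comm _ _)))
    · rintro (rfl | rfl | rfl)
      · exact ⟨{0,1}, by decide, fun i => Iff.rfl,
          by rw [show ({0,1} : Finset (Fin 4))ᶜ = {2,3} by decide]⟩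
      · exact ⟨{0,2}, by decide, fun i => Iff.rfl,
          by rw [show ({0,2} : Finset (Fin 4))ᶜ = {1,3} by decide]⟩
      · exact ⟨{0,3}, by decide, fun i => Iff.rfl,
          by rw [show ({0,3} : Finset (Fin 4))ᶜ = {1,2} by decide]⟩
  rw [hset]
  refine Set.ncard_eq_three.mpr ⟨_, _, _, ?_, ?_, ?_, rfl⟩
  · intro h
    rcases DX_mem_pair (h ▸ (Set.mem_insert _ _)) with h' | h' <;> revert h' <;> decide
  · intro h
    rcases DX_mem_pair (h ▸ (Set.mem_insert _ _)) with h' | h' <;> revert h' <;> decide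
  · intro h
    rcases DX_mem_pair (h ▸ (Set.mem_insert _ _)) with h' | h' <;> revert h' <;> decide

lemma count_one (φ : Equiv.Perm (Fin 4)) (a : Finset (Fin 4)) (ha : a.card = 2)
    (hainv : ∀ i, φ i ∈ a ↔ i ∈ a)
    (huniq : ∀ X : Finset (Fin 4), X.card = 2 → (∀ i, φ i ∈ X ↔ i ∈ X) →
      X = a ∨ X = aᶜ) :
    {D : Set (MSimplex 4) |
      ∃ S₁ S₂ : MSimplex 4, IsSpecialDecomp 4 φ S₁ S₂ ∧ D = {S₁, S₂}}.ncard = 1 := by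
  rw [count_set]
  have hset : {D : Set (MSimplex 4) | ∃ X : Finset (Fin 4), X.card = 2 ∧
      (∀ i, φ i ∈ X ↔ i ∈ X) ∧ D = {DX 4 φ X, DX 4 φ Xᶜ}} =
      {{DX 4 φ a, DX 4 φ aᶜ}} := by
    ext D
    constructor
    · rintro ⟨X, hc, hinv, rfl⟩
      rcases huniq X hc hinv with rfl | rfl
      · rfl
      · exact Set.mem_singleton_iff.mpr (by rw [compl_compl]; exact Set.pair_comm _ _)
    · rintro rfl
      exact ⟨a, ha, hainv, rfl⟩
  rw [hset, Set.ncard_singleton]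

end Assembly

/-- 𝔐_{(n,φ)} admits a special decomposition iff n = 4 and φ is conjugate in S₄ to id,
to (12)(34) or to (12) (equivalently, its cycle type is 0, {2,2} or {2}); moreover,
counting unordered pairs of simplices, 𝔐_{(4,id)} has exactly 3 special decompositions
while 𝔐_{(4,(13)(24))} and 𝔐_{(4,(12))} have exactly one each. -/
theorem stmt8 (n : ℕ) (hn : 4 ≤ n) (φ : Equiv.Perm (Fin n)) :
    ((∃ S₁ S₂ : MSimplex n, IsSpecialDecomp n φ S₁ S₂) ↔
      (n = 4 ∧ (φ.cycleType = 0 ∨ φ.cycleType = {2, 2} ∨ φ.cycleType = {2}))) ∧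
    {D : Set (MSimplex 4) |
      ∃ S₁ S₂ : MSimplex 4, IsSpecialDecomp 4 1 S₁ S₂ ∧ D = {S₁, S₂}}.ncard = 3 ∧
    {D : Set (MSimplex 4) |
      ∃ S₁ S₂ : MSimplex 4,
        IsSpecialDecomp 4 (Equiv.swap (0 : Fin 4) 2 * Equiv.swap (1 : Fin 4) 3) S₁ S₂ ∧
        D = {S₁, S₂}}.ncard = 1 ∧
    {D : Set (MSimplex 4) |
      ∃ S₁ S₂ : MSimplex 4,
        IsSpecialDecomp 4 (Equiv.swap (0 : Fin 4) 1) S₁ S₂ ∧ D = {S₁, S₂}}.ncard = 1 := by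
  refine ⟨?_, count_id, ?_, ?_⟩
  · constructor
    · rintro ⟨S₁, S₂, h⟩
      obtain ⟨hn4, X, hc, hinv, -, -⟩ := main_struct hn h
      subst hn4
      exact ⟨rfl, (bridge φ).mp ⟨X, hc, hinv⟩⟩
    · rintro ⟨rfl, hct⟩
      obtain ⟨X, hc, hinv⟩ := (bridge φ).mpr hct
      exact ⟨DX 4 φ X, DX 4 φ Xᶜ, verify hc hinv⟩
  · exact count_one _ {0,2} (by decide) (by decide)
      (by decide)
  · exact count_one _ {0,1} (by decide) (by decide)
      (by decide)
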